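/- arXiv:1302.2675 — 2 statements merged into one kernel-verified Lean document; each statement's English description precedes it below -/
import Mathlib

section
/- G has an accepting path if and only if G'' contains infinitely many F-nodes, where G'' is obtained from G' by removing all nodes with only finitely many descendants in G'. -/
/-- Strict lexicographic order on finite 0-1 profiles. -/
def ProfLt (a b : List Bool) : Prop := List.Lex (· < ·) a b

/-- Non-strict lexicographic order on finite 0-1 profiles. -/
def ProfLe (a b : List Bool) : Prop := a = b ∨ ProfLt a b

/-- A nondeterministic Büchi automaton on infinite words. -/
structure NBW (Q : Type) (σ : Type) where
  init : Set Q
  trans : Q → σ → Set Q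
  acc : Q → Bool

namespace NBW

variable {Q σ : Type} (A : NBW Q σ) (w : ℕ → σ)

/-- `(q,i)` is a vertex of the run DAG of `A` on `w`. -/
def InDag (v : Q × ℕ) : Prop :=
  ∃ p : ℕ → Q, p 0 ∈ A.init ∧ (∀ j, j < v.2 → p (j + 1) ∈ A.trans (p j) (w j)) ∧ p v.2 = v.1

/-- Edge of the run DAG. -/
def Edge (u v : Q × ℕ) : Prop :=
  A.InDag w u ∧ v.2 = u.2 + 1 ∧ v.1 ∈ A.trans u.1 (w u.2)

/-- An infinite initial path through the (sub-)DAG with edge relation `E`. -/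
def IsPath (E : Q × ℕ → Q × ℕ → Prop) (π : ℕ → Q × ℕ) : Prop :=
  (π 0).1 ∈ A.init ∧ (π 0).2 = 0 ∧ ∀ i, E (π i) (π (i + 1))

/-- An accepting path: initial and visiting F-nodes infinitely often. -/
def AcceptingPath (E : Q × ℕ → Q × ℕ → Prop) (π : ℕ → Q × ℕ) : Prop :=
  A.IsPath E π ∧ ∀ N, ∃ i, N ≤ i ∧ A.acc (π i).1 = true

/-- Profile (sequence of acceptance labels) of the first `i+1` states of `p`. -/
def profileOf (p : ℕ → Q) (i : ℕ) : List Bool :=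
  (List.range (i + 1)).map fun j => A.acc (p j)

/-- `p` encodes a finite initial run ending at node `v`. -/
def FinRunTo (p : ℕ → Q) (v : Q × ℕ) : Prop :=
  p 0 ∈ A.init ∧ (∀ j, j < v.2 → p (j + 1) ∈ A.trans (p j) (w j)) ∧ p v.2 = v.1

/-- `h` assigns to each node the lexicographically maximal profile
over all finite initial runs to it. -/
def IsProfileFun (h : Q × ℕ → List Bool) : Prop :=
  ∀ v, A.InDag w v →
    (∃ p, A.FinRunTo w p v ∧ A.profileOf p v.2 = h v) ∧
    ∀ p, A.FinRunTo w p v → ProfLe (A.profileOf p v.2) (h v)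

/-- Edges of the pruned DAG `G'`: only edges from predecessors of
lexicographically maximal profile are kept. -/
def Edge' (h : Q × ℕ → List Bool) (u v : Q × ℕ) : Prop :=
  A.Edge w u v ∧ ∀ u', A.Edge w u' v → ¬ ProfLt (h u) (h u')

/-- `v` is finite in `G'`: it has finitely many descendants in `G'`. -/
def FiniteIn' (h : Q × ℕ → List Bool) (v : Q × ℕ) : Prop :=
  Set.Finite {u | Relation.ReflTransGen (A.Edge' w h) v u}

/-- Vertices of `G''`: vertices of the run DAG that are not finite in `G'`. -/
def InDag'' (h : Q × ℕ → List Bool) (v : Q × ℕ) : Prop :=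
  A.InDag w v ∧ ¬ A.FiniteIn' w h v

/-- Edges of `G''`. -/
def Edge'' (h : Q × ℕ → List Bool) (u v : Q × ℕ) : Prop :=
  A.Edge' w h u v ∧ A.InDag'' w h u ∧ A.InDag'' w h v

/-- `lam` is the retrospective labeling `λ^k`: ⊤ at levels ≤ k, ⊥ on F-nodes
after level k, inherited along `G'`-edges otherwise. -/
def IsRetroLabeling (h : Q × ℕ → List Bool) (k : ℕ) (lam : Q × ℕ → Bool) : Prop :=
  (∀ u, A.InDag w u → u.2 ≤ k → lam u = true) ∧
  (∀ u, A.InDag w u → k < u.2 → A.acc u.1 = true → lam u = false) ∧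
  (∀ u v, k < v.2 → A.acc v.1 = false → A.Edge' w h u v → lam v = lam u)

/-- A labeling is legal when every ⊥-labeled node is finite in `G'`. -/
def Legal (h : Q × ℕ → List Bool) (lam : Q × ℕ → Bool) : Prop :=
  ∀ u, A.InDag w u → lam u = false → A.FiniteIn' w h u

/-- `α(u)`: the number of ⊤-labeled profile-equivalence classes on `u`'s level
whose profile is strictly greater than `h u`. -/
noncomputable def alphaCount (h : Q × ℕ → List Bool) (lam : Q × ℕ → Bool) (u : Q × ℕ) : ℕ :=
  Set.ncard {p : List Bool | ∃ v, A.InDag w v ∧ v.2 = u.2 ∧ lam v = true ∧ h v = p ∧ ProfLt (h u) p}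

/-- The `k`-retrospective ranking (with top rank `m`). -/
noncomputable def retroRank (h : Q × ℕ → List Bool) (lam : Q × ℕ → Bool) (k m : ℕ)
    (u : Q × ℕ) : ℕ :=
  if u.2 ≤ k then m
  else if lam u then 2 * A.alphaCount w h lam u + 1 else 2 * A.alphaCount w h lam u

/-- `m = 2 |Q \ F|`. -/
def mBound [Fintype Q] : ℕ :=
  2 * Finset.card (Finset.univ.filter fun q => A.acc q = false)

end NBW

section ListAux

open List in
lemma profLt_iff_lt {a b : List Bool} : ProfLt a b ↔ a < b := Iff.rfl

lemma profLe_iff_le {a b : List Bool} : ProfLe a b ↔ a ≤ b := by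
  rw [ProfLe, profLt_iff_lt, le_iff_lt_or_eq]; tauto

lemma bool_lt_iff {x y : Bool} : x < y ↔ x = false ∧ y = true := by
  revert x y; decide

lemma cons_le_cons_bool {a : Bool} {l l' : List Bool} (h : l ≤ l') : a :: l ≤ a :: l' := by
  rcases lt_or_eq_of_le h with h | h
  · exact le_of_lt (List.Lex.cons h)
  · rw [h]

lemma lex_take {a b : List Bool} (h : List.Lex (· < ·) a b) (k : ℕ) :
    a.take k ≤ b.take k := by
  induction h generalizing k with
  | nil =>
    cases k with
    | zero => simp
    | succ k => exact le_of_lt (List.nil_lt_cons _ _)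
  | cons h ih =>
    cases k with
    | zero => simp
    | succ k => exact cons_le_cons_bool (ih k)
  | rel h =>
    cases k with
    | zero => simp
    | succ k => exact le_of_lt (List.Lex.rel h)

lemma le_take {a b : List Bool} (h : a ≤ b) (k : ℕ) : a.take k ≤ b.take k := by
  rcases lt_or_eq_of_le h with h | h
  · exact lex_take h k
  · rw [h]

lemma lex_append_single {a b : List Bool} (h : List.Lex (· < ·) a b)
    (hl : a.length = b.length) (x : Bool) :
    List.Lex (· < ·) (a ++ [x]) (b ++ [x]) := by
  induction h with
  | nil => simp at hl
  | cons h ih => exact List.Lex.cons (ih (by simpa using hl))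
  | rel h => exact List.Lex.rel h

lemma le_append_single {a b : List Bool} (hl : a.length = b.length) (h : a ≤ b) (x : Bool) :
    a ++ [x] ≤ b ++ [x] := by
  rcases lt_or_eq_of_le h with h | h
  · exact le_of_lt (lex_append_single h hl x)
  · rw [h]

lemma lex_firstdiff {a b : List Bool} (h : List.Lex (· < ·) a b) (hl : a.length = b.length) :
    ∃ i, i < a.length ∧ a.take i = b.take i ∧
      a.getD i false = false ∧ b.getD i false = true := by
  induction h with
  | nil => simp at hl
  | @cons c l₁ l₂ h ih =>
    obtain ⟨i, hi, ht, ha, hb⟩ := ih (by simpa using hl)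
    exact ⟨i + 1, by simpa using hi, by simp [ht], by simpa using ha, by simpa using hb⟩
  | @rel x l₁ y l₂ h =>
    obtain ⟨hx, hy⟩ := bool_lt_iff.mp h
    exact ⟨0, by simp, by simp, by simpa using hx, by simpa using hy⟩

lemma getD_take {l : List Bool} {k i : ℕ} (h : i < k) (d : Bool) :
    (l.take k).getD i d = l.getD i d := by
  simp [List.getD_eq_getElem?_getD, List.getElem?_take, h]

lemma list_ext_getD {a b : List Bool} (hl : a.length = b.length)
    (h : ∀ i, i < a.length → a.getD i false = b.getD i false) : a = b := by
  refine List.ext_getElem hl fun i h1 h2 => ?_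
  have := h i h1
  rwa [List.getD_eq_getElem _ _ h1, List.getD_eq_getElem _ _ h2] at this

/-- the first `n+1` bits of `β` as a list. -/
def pre (β : ℕ → Bool) (n : ℕ) : List Bool := (List.range (n + 1)).map β

@[simp] lemma pre_length (β : ℕ → Bool) (n : ℕ) : (pre β n).length = n + 1 := by simp [pre]

lemma pre_getD {β : ℕ → Bool} {n j : ℕ} (hj : j ≤ n) : (pre β n).getD j false = β j := by
  have hj' : j < n + 1 := Nat.lt_succ_of_le hj
  rw [pre, List.getD_eq_getElem _ _ (by simpa using hj')]
  simp

lemma pre_take {β : ℕ → Bool} {n k : ℕ} (hk : k ≤ n) : (pre β n).take (k + 1) = pre β k := by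
  rw [pre, pre, ← List.map_take, List.take_range]
  have : min (k + 1) (n + 1) = k + 1 := by omega
  rw [this]

end ListAux

section DagAux

variable {Q σ : Type} (A : NBW Q σ) (w : ℕ → σ) {h : Q × ℕ → List Bool}

lemma profileOf_eq_pre (p : ℕ → Q) (n : ℕ) :
    A.profileOf p n = pre (fun j => A.acc (p j)) n := rfl

lemma profileOf_succ (p : ℕ → Q) (n : ℕ) :
    A.profileOf p (n + 1) = A.profileOf p n ++ [A.acc (p (n + 1))] := by
  unfold NBW.profileOf
  rw [List.range_succ]
  simp

lemma profileOf_length (p : ℕ → Q) (n : ℕ) : (A.profileOf p n).length = n + 1 := by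
  simp [NBW.profileOf]

lemma profileOf_getD (p : ℕ → Q) {n j : ℕ} (hj : j ≤ n) :
    (A.profileOf p n).getD j false = A.acc (p j) := by
  rw [profileOf_eq_pre, pre_getD hj]

lemma finRunTo_inDag {p : ℕ → Q} {v} (hp : A.FinRunTo w p v) : A.InDag w v := ⟨p, hp⟩

lemma finRunTo_pred {p : ℕ → Q} {v n} (hp : A.FinRunTo w p v) (hn : v.2 = n + 1) :
    A.FinRunTo w p (p n, n) ∧ A.Edge w (p n, n) v := by
  obtain ⟨h0, hstep, hend⟩ := hp
  rw [hn] at hstep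
  have htr : v.1 ∈ A.trans (p n) (w n) := by
    have h1 := hstep n (by omega)
    rw [hn] at hend
    rwa [hend] at h1
  refine ⟨⟨h0, fun j hj => hstep j (by omega), rfl⟩,
    ⟨⟨p, h0, fun j hj => hstep j (by omega), rfl⟩, by simp [hn], htr⟩⟩

lemma extend_run {p : ℕ → Q} {u v} (hp : A.FinRunTo w p u) (e : A.Edge w u v) :
    ∃ p', A.FinRunTo w p' v ∧ A.profileOf p' v.2 = A.profileOf p u.2 ++ [A.acc v.1] := by
  obtain ⟨h0, hstep, hend⟩ := hp
  obtain ⟨-, hv2, htr⟩ := e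
  refine ⟨fun j => if j ≤ u.2 then p j else v.1, ⟨by simp [h0], ?_, ?_⟩, ?_⟩
  · intro j hj
    rw [hv2] at hj
    rcases Nat.lt_or_ge j u.2 with hj' | hj'
    · simp only [if_pos (by omega : j ≤ u.2), if_pos (by omega : j + 1 ≤ u.2)]
      exact hstep j (by omega)
    · have hje : j = u.2 := by omega
      rw [hje]
      simp only [if_pos (le_refl u.2), if_neg (by omega : ¬ u.2 + 1 ≤ u.2)]
      rwa [hend]
  · rw [hv2]
    simp
  · rw [hv2, profileOf_succ]
    have he1 : A.profileOf (fun j => if j ≤ u.2 then p j else v.1) u.2 = A.profileOf p u.2 := by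
      unfold NBW.profileOf
      refine List.map_congr_left fun j hj => ?_
      rw [List.mem_range] at hj
      simp [if_pos (by omega : j ≤ u.2)]
    rw [he1]
    simp

lemma edge_inDag_right {u v} (e : A.Edge w u v) : A.InDag w v := by
  obtain ⟨p, hp⟩ := e.1
  obtain ⟨p', hp', -⟩ := extend_run A w hp e
  exact ⟨p', hp'⟩

variable {A w}

section WithProf
variable (hprof : A.IsProfileFun w h)
include hprof

lemma h_length {v} (hv : A.InDag w v) : (h v).length = v.2 + 1 := by
  obtain ⟨p, -, hpe⟩ := (hprof v hv).1
  rw [← hpe, profileOf_length]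

lemma h_getD_last {v} (hv : A.InDag w v) : (h v).getD v.2 false = A.acc v.1 := by
  obtain ⟨p, hp, hpe⟩ := (hprof v hv).1
  rw [← hpe, profileOf_getD _ _ le_rfl, hp.2.2]

lemma edge_h_le {u v} (e : A.Edge w u v) : h u ++ [A.acc v.1] ≤ h v := by
  obtain ⟨p, hp, hpe⟩ := (hprof u e.1).1
  obtain ⟨p', hp', hpe'⟩ := extend_run A w hp e
  have hle := (hprof v (finRunTo_inDag A w hp')).2 p' hp'
  rw [profLe_iff_le] at hle
  calc h u ++ [A.acc v.1] = A.profileOf p' v.2 := by rw [hpe', hpe]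
  _ ≤ h v := hle

omit hprof in
lemma exists_edge'_pred [Finite Q] {v : Q × ℕ} {n} (hv : A.InDag w v) (hn : v.2 = n + 1) :
    ∃ u, A.Edge' w h u v ∧ u.2 = n := by
  classical
  have hPn : {u : Q × ℕ | A.Edge w u v}.Nonempty := by
    obtain ⟨p, hp⟩ := hv
    exact ⟨_, (finRunTo_pred A w hp hn).2⟩
  have hlev : ∀ u ∈ {u : Q × ℕ | A.Edge w u v}, u.2 = n := by
    intro u hu
    have := hu.2.1
    omega
  have hPf : {u : Q × ℕ | A.Edge w u v}.Finite := by
    apply (Set.finite_range fun q : Q => (q, n)).subset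
    intro u hu
    refine ⟨u.1, ?_⟩
    have := hlev u hu
    cases u
    simp_all
  obtain ⟨u, huP, hmax⟩ := hPf.exists_maximalFor h _ hPn
  refine ⟨u, ⟨huP, fun u' hu' hlt => ?_⟩, hlev u huP⟩
  rw [profLt_iff_lt] at hlt
  exact absurd (hmax hu' hlt.le) (not_le.mpr hlt)

lemma edge'_h {u v} (e : A.Edge' w h u v) : h v = h u ++ [A.acc v.1] := by
  have hu : A.InDag w u := e.1.1
  have hv : A.InDag w v := edge_inDag_right A w e.1
  obtain ⟨p, hp, hpe⟩ := (hprof v hv).1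
  have hn : v.2 = u.2 + 1 := e.1.2.1
  obtain ⟨hpu, hedge⟩ := finRunTo_pred A w hp hn
  have h1 : A.profileOf p u.2 ≤ h (p u.2, u.2) := by
    have h1' := (hprof _ (finRunTo_inDag A w hpu)).2 p hpu
    rw [profLe_iff_le] at h1'
    exact h1'
  have h2 : h (p u.2, u.2) ≤ h u := by
    have h2' := e.2 _ hedge
    rw [profLt_iff_lt] at h2'
    exact not_lt.mp h2'
  have h3 : h v = A.profileOf p u.2 ++ [A.acc v.1] := by
    rw [← hpe, hn, profileOf_succ]
    have : p (u.2 + 1) = v.1 := by rw [← hn, hp.2.2]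
    rw [this]
  refine le_antisymm ?_ (edge_h_le hprof e.1)
  rw [h3]
  exact le_append_single
    (by rw [profileOf_length, h_length hprof hu]) (h1.trans h2) _

lemma edge'_h_take {u v} (e : A.Edge' w h u v) : h u = (h v).take (u.2 + 1) := by
  rw [edge'_h hprof e, List.take_append_of_le_length (by rw [h_length hprof e.1.1]),
      List.take_of_length_le (by rw [h_length hprof e.1.1])]

lemma exists_ancestor [Finite Q] {v : Q × ℕ} (hv : A.InDag w v) {n} (hn : n ≤ v.2) :
    ∃ u, A.InDag w u ∧ u.2 = n ∧ h u = (h v).take (n + 1) := by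
  have key : ∀ d (v : Q × ℕ), A.InDag w v → d ≤ v.2 →
      ∃ u, A.InDag w u ∧ u.2 = v.2 - d ∧ h u = (h v).take (v.2 - d + 1) := by
    intro d
    induction d with
    | zero =>
      intro v hv _
      exact ⟨v, hv, by omega,
        by rw [Nat.sub_zero, List.take_of_length_le (by rw [h_length hprof hv])]⟩
    | succ d ih =>
      intro v hv hd
      obtain ⟨u, hu, hul, huh⟩ := ih v hv (by omega)
      have hu2 : u.2 = (v.2 - (d + 1)) + 1 := by omega
      obtain ⟨u', hu', hu'l⟩ := exists_edge'_pred hu hu2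
      refine ⟨u', hu'.1.1, by omega, ?_⟩
      rw [edge'_h_take hprof hu', huh, List.take_take, hu'l]
      have : min (v.2 - (d + 1) + 1) (v.2 - d + 1) = v.2 - (d + 1) + 1 := by omega
      rw [this]
  obtain ⟨u, h1, h2, h3⟩ := key (v.2 - n) v hv (by omega)
  have he : v.2 - (v.2 - n) = n := by omega
  rw [he] at h2 h3
  exact ⟨u, h1, h2, h3⟩

end WithProf

lemma level_finite [Finite Q] (n : ℕ) : {v : Q × ℕ | v.2 = n}.Finite := by
  apply (Set.finite_range fun q : Q => (q, n)).subset
  intro v hv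
  refine ⟨v.1, ?_⟩
  cases v
  simp_all

lemma unbounded_infinite {S : Set (Q × ℕ)} (hub : ∀ m, ∃ v ∈ S, m ≤ v.2) : S.Infinite := by
  intro hf
  obtain ⟨M, hM⟩ := (hf.image Prod.snd).bddAbove
  obtain ⟨v, hv, hle⟩ := hub (M + 1)
  have := hM (Set.mem_image_of_mem _ hv)
  change v.2 ≤ M at this
  omega

lemma infinite_unbounded [Finite Q] {S : Set (Q × ℕ)} (hS : S.Infinite) (m : ℕ) :
    ∃ v ∈ S, m ≤ v.2 := by
  by_contra hc
  push_neg at hc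
  apply hS
  apply Set.Finite.subset (Set.finite_range fun qk : Q × Fin m => (qk.1, (qk.2 : ℕ)))
  intro v hv
  exact ⟨(v.1, ⟨v.2, hc v hv⟩), by simp⟩

lemma exists_edge'_succ [Finite Q] {v : Q × ℕ}
    (hv : A.InDag'' w h v) : ∃ u, A.Edge' w h v u ∧ A.InDag'' w h u := by
  by_contra hc
  push_neg at hc
  apply hv.2
  have hCf : {c : Q × ℕ | A.Edge' w h v c}.Finite :=
    (level_finite (v.2 + 1)).subset fun c hc' => hc'.1.2.1
  have hsub : {x | Relation.ReflTransGen (A.Edge' w h) v x} ⊆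
      {v} ∪ ⋃ c ∈ {c : Q × ℕ | A.Edge' w h v c}, {x | Relation.ReflTransGen (A.Edge' w h) c x} := by
    intro x hx
    rcases hx.cases_head with h1 | ⟨c, hc1, hc2⟩
    · left; simp [h1]
    · right
      exact Set.mem_biUnion hc1 hc2
  refine Set.Finite.subset (Set.Finite.union (Set.finite_singleton v)
    (Set.Finite.biUnion hCf ?_)) hsub
  intro c hcC
  by_contra hfin
  exact hc c hcC ⟨edge_inDag_right A w hcC.1, hfin⟩

end DagAux

section MainAux

variable {Q σ : Type} [Finite Q] {A : NBW Q σ} {w : ℕ → σ} {h : Q × ℕ → List Bool}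

/-- The set of infinite branches of the profile tree. -/
def BranchSet (A : NBW Q σ) (w : ℕ → σ) (h : Q × ℕ → List Bool) : Set (ℕ → Bool) :=
  {β | ∀ n, ∃ v, A.InDag w v ∧ v.2 = n ∧ h v = pre β n}

lemma branch_finite : (BranchSet A w h).Finite := by
  classical
  haveI : Fintype Q := Fintype.ofFinite Q
  by_contra hinf
  have hinf' : (BranchSet A w h).Infinite := hinf
  obtain ⟨t, hts, htc⟩ := hinf'.exists_subset_card_eq (Fintype.card Q + 1)
  have htne : t.Nonempty := Finset.card_pos.mp (by omega)
  obtain ⟨β₀, hβ₀⟩ := htne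
  obtain ⟨v₀, -, -, -⟩ := (hts hβ₀) 0
  haveI : Nonempty (Q × ℕ) := ⟨v₀⟩
  have hdiff : ∀ β β' : ℕ → Bool, β ≠ β' → ∃ j, β j ≠ β' j := by
    intro β β' hne
    by_contra hc
    push_neg at hc
    exact hne (funext hc)
  set d : (ℕ → Bool) → (ℕ → Bool) → ℕ :=
    fun β β' => if hb : β = β' then 0 else Nat.find (hdiff β β' hb) with hd
  set M := t.sup fun β => t.sup fun β' => d β β' with hM
  have hgex : ∀ β : ℕ → Bool, ∃ v : Q × ℕ, β ∈ t → A.InDag w v ∧ v.2 = M ∧ h v = pre β M := by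
    intro β
    by_cases hβ : β ∈ t
    · obtain ⟨v, hv⟩ := (hts hβ) M
      exact ⟨v, fun _ => hv⟩
    · exact ⟨v₀, fun hmem => absurd hmem hβ⟩
  choose g hg using hgex
  have hinj : Set.InjOn g ↑t := by
    intro β hβ β' hβ' heq
    by_contra hne
    have hj := Nat.find_spec (hdiff β β' hne)
    have hjle : d β β' ≤ M := by
      calc d β β' ≤ t.sup fun β' => d β β' := Finset.le_sup hβ'
      _ ≤ M := Finset.le_sup (f := fun β => t.sup fun β' => d β β') hβ
    have hdval : d β β' = Nat.find (hdiff β β' hne) := by rw [hd]; simp [hne]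
    have hpre : pre β M = pre β' M := by
      rw [← (hg β hβ).2.2, ← (hg β' hβ').2.2, heq]
    have : β (d β β') = β' (d β β') := by
      rw [← pre_getD (β := β) hjle, ← pre_getD (β := β') hjle, hpre]
    rw [hdval] at this
    exact hj this
  have hmaps : ∀ β ∈ t, g β ∈ Finset.univ.image fun q : Q => (q, M) := by
    intro β hβ
    have h2 := (hg β hβ).2.1
    refine Finset.mem_image.mpr ⟨(g β).1, Finset.mem_univ _, ?_⟩
    cases hgb : g β
    simp_all
  have := Finset.card_le_card_of_injOn g hmaps (hinj.mono (by simp))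
  have hle := Finset.card_image_le (s := (Finset.univ : Finset Q)) (f := fun q : Q => (q, M))
  simp only [Finset.card_univ] at hle
  omega

lemma realize (hprof : A.IsProfileFun w h) {β : ℕ → Bool} (hβ : β ∈ BranchSet A w h) :
    ∃ π : ℕ → Q × ℕ, (∀ n, (π n).2 = n ∧ A.InDag'' w h (π n) ∧ h (π n) = pre β n) ∧
      ∀ n, A.Edge' w h (π n) (π (n + 1)) := by
  classical
  set R : Q × ℕ → Q × ℕ → Prop := fun a b => A.Edge' w h a b ∧ h b = pre β b.2 with hR
  set Good : Q × ℕ → Prop := fun u =>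
    A.InDag w u ∧ h u = pre β u.2 ∧ ∀ m, ∃ x, Relation.ReflTransGen R u x ∧ m ≤ x.2 with hGood
  have back : ∀ n (v : Q × ℕ), A.InDag w v → v.2 = n → h v = pre β n →
      ∃ u, (A.InDag w u ∧ u.2 = 0 ∧ h u = pre β 0) ∧ Relation.ReflTransGen R u v := by
    intro n
    induction n with
    | zero =>
      intro v hv h2 h3
      exact ⟨v, ⟨hv, h2, h3⟩, Relation.ReflTransGen.refl⟩
    | succ n ih =>
      intro v hv h2 h3
      obtain ⟨u, hu, hul⟩ := exists_edge'_pred hv h2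
      have huD : A.InDag w u := hu.1.1
      have huh : h u = pre β n := by
        rw [edge'_h_take hprof hu, h3, hul, pre_take (by omega)]
      obtain ⟨r, hr, hrtg⟩ := ih u huD hul huh
      refine ⟨r, hr, hrtg.tail ⟨hu, ?_⟩⟩
      rw [h2, h3]
  set X0 := {u : Q × ℕ | A.InDag w u ∧ u.2 = 0 ∧ h u = pre β 0} with hX0
  have hX0fin : X0.Finite := (level_finite 0).subset fun u hu => hu.2.1
  haveI := hX0fin.to_subtype
  choose vn hvn1 hvn2 hvn3 using hβ
  have hroots : ∀ n : ℕ, ∃ r : ↥X0, Relation.ReflTransGen R r.1 (vn n) := by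
    intro n
    obtain ⟨u, hu, hrtg⟩ := back n (vn n) (hvn1 n) (hvn2 n) (hvn3 n)
    exact ⟨⟨u, hu⟩, hrtg⟩
  choose g hg using hroots
  obtain ⟨r, hrfib⟩ := Finite.exists_infinite_fiber g
  have hrfib' : (g ⁻¹' {r}).Infinite := Set.infinite_coe_iff.mp hrfib
  have hrootGood : ∃ u : Q × ℕ, u.2 = 0 ∧ Good u := by
    refine ⟨r.1, r.2.2.1, r.2.1, by rw [r.2.2.2, r.2.2.1], fun m => ?_⟩
    obtain ⟨n, hn_mem, hn_gt⟩ := hrfib'.exists_gt m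
    have : g n = r := hn_mem
    refine ⟨vn n, ?_, by rw [hvn2 n]; omega⟩
    rw [← this]
    exact hg n
  have step : ∀ u : Q × ℕ, Good u → ∃ c, R u c ∧ Good c := by
    intro u hu
    set C := {c : Q × ℕ | R u c} with hC
    have hCfin : C.Finite := (level_finite (u.2 + 1)).subset fun c hc => hc.1.1.2.1
    haveI := hCfin.to_subtype
    have hw : ∀ m : ℕ, ∃ c : ↥C, ∃ x, Relation.ReflTransGen R c.1 x ∧ u.2 + 1 + m ≤ x.2 := by
      intro m
      obtain ⟨x, hx, hxl⟩ := hu.2.2 (u.2 + 1 + m)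
      rcases hx.cases_head with h1 | ⟨c, hc1, hc2⟩
      · rw [h1] at hxl; omega
      · exact ⟨⟨c, hc1⟩, x, hc2, hxl⟩
    choose g2 x2 hx2 hx2l using hw
    obtain ⟨c, hcfib⟩ := Finite.exists_infinite_fiber g2
    have hcfib' : (g2 ⁻¹' {c}).Infinite := Set.infinite_coe_iff.mp hcfib
    refine ⟨c.1, c.2, edge_inDag_right A w c.2.1.1, c.2.2, fun m => ?_⟩
    obtain ⟨k, hk_mem, hk_gt⟩ := hcfib'.exists_gt m
    have hgk : g2 k = c := hk_mem
    refine ⟨x2 k, ?_, by have := hx2l k; omega⟩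
    have := hx2 k
    rwa [hgk] at this
  obtain ⟨r0, hr0l, hr0g⟩ := hrootGood
  choose F hF1 hF2 using step
  set π' : ℕ → {u : Q × ℕ // Good u} := fun n =>
    Nat.rec (⟨r0, hr0g⟩ : {u : Q × ℕ // Good u})
      (fun _ p => ⟨F p.1 p.2, hF2 p.1 p.2⟩) n with hπ'
  have hedge : ∀ n, R (π' n).1 (π' (n + 1)).1 := fun n => hF1 (π' n).1 (π' n).2
  have hlev : ∀ n, ((π' n).1).2 = n := by
    intro n
    induction n with
    | zero => exact hr0l
    | succ n ih =>
      have := (hedge n).1.1.2.1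
      omega
  refine ⟨fun n => (π' n).1, fun n => ?_, fun n => (hedge n).1⟩
  have hG := (π' n).2
  refine ⟨hlev n, ⟨hG.1, fun hfin => ?_⟩, by rw [hG.2.1, hlev n]⟩
  have hsub : {x | Relation.ReflTransGen R (π' n).1 x} ⊆
      {x | Relation.ReflTransGen (A.Edge' w h) (π' n).1 x} :=
    fun x hx => Relation.ReflTransGen.mono (r := R) (p := A.Edge' w h) (by intro a b hab; exact hab.1) _ _ hx
  exact (unbounded_infinite (hG.2.2)).mono hsub hfin

end MainAux

section MainAux2

variable {Q σ : Type} [Finite Q] {A : NBW Q σ} {w : ℕ → σ} {h : Q × ℕ → List Bool}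

omit [Finite Q] in
lemma acc_of_pre (hprof : A.IsProfileFun w h) {v : Q × ℕ} (hv : A.InDag w v) {β : ℕ → Bool}
    {n : ℕ} (hl : v.2 = n) (hh : h v = pre β n) : A.acc v.1 = β n := by
  have hx := h_getD_last hprof hv
  rw [hl, hh, pre_getD le_rfl] at hx
  exact hx.symm

lemma fromInfinite (hprof : A.IsProfileFun w h)
    (hS : {v : Q × ℕ | A.InDag'' w h v ∧ A.acc v.1 = true}.Infinite) :
    ∃ β ∈ BranchSet A w h, ∀ N, ∃ n, N ≤ n ∧ β n = true := by
  classical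
  set S := {v : Q × ℕ | A.InDag'' w h v ∧ A.acc v.1 = true} with hSdef
  have main : ∀ v : Q × ℕ, v ∈ S → ∃ β ∈ BranchSet A w h, β v.2 = true := by
    intro v hv
    choose Fs hFs1 hFs2 using fun (u : Q × ℕ) (hu : A.InDag'' w h u) => exists_edge'_succ hu
    set fwd : ℕ → {u : Q × ℕ // A.InDag'' w h u} := fun k =>
      Nat.rec (⟨v, hv.1⟩ : {u : Q × ℕ // A.InDag'' w h u})
        (fun _ p => ⟨Fs p.1 p.2, hFs2 p.1 p.2⟩) k with hfwd
    have hfe : ∀ k, A.Edge' w h (fwd k).1 (fwd (k + 1)).1 := fun k => hFs1 (fwd k).1 (fwd k).2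
    have hflev : ∀ k, ((fwd k).1).2 = v.2 + k := by
      intro k
      induction k with
      | zero => rfl
      | succ k ih => have := (hfe k).1.2.1; omega
    have hfD : ∀ k, A.InDag w (fwd k).1 := fun k => (fwd k).2.1
    have hlen : ∀ k, (h (fwd k).1).length = v.2 + k + 1 := fun k => by
      rw [h_length hprof (hfD k), hflev k]
    have hpref : ∀ j k, j ≤ k → h (fwd j).1 = (h (fwd k).1).take (v.2 + j + 1) := by
      intro j k hjk
      induction k with
      | zero =>
        have hj0 : j = 0 := by omega
        subst hj0
        rw [List.take_of_length_le (by rw [hlen 0])]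
      | succ k ih =>
        rcases Nat.lt_or_ge j (k + 1) with hlt | hge
        · rw [edge'_h hprof (hfe k),
            List.take_append_of_le_length (by rw [hlen k]; omega), ih (by omega)]
        · have hj : j = k + 1 := by omega
          subst hj
          rw [List.take_of_length_le (by rw [hlen (k + 1)])]
    set βv : ℕ → Bool := fun j => (h (fwd j).1).getD j false with hβv
    have hkey : ∀ n, pre βv n = (h (fwd n).1).take (n + 1) := by
      intro n
      apply list_ext_getD
      · rw [pre_length, List.length_take, hlen n]
        omega
      · intro i hi
        rw [pre_length] at hi
        have hin : i ≤ n := by omega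
        rw [pre_getD hin, getD_take (by omega)]
        show (h (fwd i).1).getD i false = (h (fwd n).1).getD i false
        rw [hpref i n hin, getD_take (by omega)]
    refine ⟨βv, ?_, ?_⟩
    · intro n
      obtain ⟨u, hu1, hu2, hu3⟩ :=
        exists_ancestor hprof (hfD n) (n := n) (by rw [hflev n]; omega)
      exact ⟨u, hu1, hu2, by rw [hu3, ← hkey n]⟩
    · show (h (fwd v.2).1).getD v.2 false = true
      have h0 : (h (fwd 0).1).getD v.2 false = true := by
        show (h v).getD v.2 false = true
        rw [h_getD_last hprof hv.1.1, hv.2]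
      rw [hpref 0 v.2 (by omega)] at h0
      rwa [getD_take (by omega)] at h0
  choose βf hβf1 hβf2 using main
  haveI : Infinite ↥S := hS.to_subtype
  haveI : Finite ↥(BranchSet A w h) := branch_finite.to_subtype
  set Ψ : ↥S → ↥(BranchSet A w h) := fun v => ⟨βf v.1 v.2, hβf1 v.1 v.2⟩ with hΨ
  obtain ⟨β, hfib⟩ := Finite.exists_infinite_fiber Ψ
  refine ⟨β.1, β.2, fun N => ?_⟩
  have hT : {v : Q × ℕ | ∃ hv : v ∈ S, βf v hv = β.1}.Infinite := by
    haveI := hfib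
    apply Set.infinite_of_injective_forall_mem (f := fun x : ↥(Ψ ⁻¹' {β}) => x.1.1)
    · intro a b hab
      exact Subtype.ext (Subtype.ext hab)
    · intro x
      refine ⟨x.1.2, ?_⟩
      have hx := x.2
      simp only [Set.mem_preimage, Set.mem_singleton_iff] at hx
      exact congrArg Subtype.val hx
  obtain ⟨v, hvT, hvlev⟩ := infinite_unbounded hT N
  obtain ⟨hvS, hvβ⟩ := hvT
  exact ⟨v.2, hvlev, by rw [← hvβ]; exact hβf2 v hvS⟩

lemma fromAccepting (hprof : A.IsProfileFun w h) {π : ℕ → Q × ℕ}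
    (hπ : A.AcceptingPath (A.Edge w) π) :
    ∃ β ∈ BranchSet A w h, ∀ N, ∃ n, N ≤ n ∧ β n = true := by
  classical
  obtain ⟨⟨hinit, hlev0, hedges⟩, hacc⟩ := hπ
  have hlev : ∀ n, (π n).2 = n := by
    intro n
    induction n with
    | zero => exact hlev0
    | succ n ih => have := (hedges n).2.1; omega
  have hD : ∀ n, A.InDag w (π n) := by
    intro n
    induction n with
    | zero =>
      refine ⟨fun _ => (π 0).1, hinit, ?_, ?_⟩
      · rw [hlev0]
        intro j hj
        omega
      · rw [hlev0]
    | succ n ih => exact edge_inDag_right A w (hedges n)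
  set q : ℕ → List Bool := fun n => h (π n) with hq
  have hqlen : ∀ n, (q n).length = n + 1 := fun n => by
    show (h (π n)).length = n + 1
    rw [h_length hprof (hD n), hlev n]
  have hstep : ∀ n, q n ++ [A.acc (π (n + 1)).1] ≤ q (n + 1) := fun n =>
    edge_h_le hprof (hedges n)
  have htake : ∀ j n, j ≤ n → (q n).take (j + 1) ≤ (q (n + 1)).take (j + 1) := by
    intro j n hjn
    have h1 := le_take (hstep n) (j + 1)
    rwa [List.take_append_of_le_length (by rw [hqlen n]; omega)] at h1
  have hchain : ∀ j m n, j ≤ m → m ≤ n → (q m).take (j + 1) ≤ (q n).take (j + 1) := by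
    intro j m n hjm hmn
    induction n with
    | zero =>
      have : m = 0 := by omega
      subst this
      exact le_refl _
    | succ n ih =>
      rcases Nat.lt_or_ge m (n + 1) with hlt | hge
      · exact (ih (by omega)).trans (htake j n (by omega))
      · have : m = n + 1 := by omega
        subst this
        exact le_refl _
  have hstab : ∀ j, ∃ n₀ r, j ≤ n₀ ∧ ∀ n, n₀ ≤ n → (q n).take (j + 1) = r := by
    intro j
    have hSf : ((fun n => (q n).take (j + 1)) '' {n | j ≤ n}).Finite := by
      apply (List.finite_length_le Bool (j + 1)).subset
      rintro l ⟨n, hn, rfl⟩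
      simp only [Set.mem_setOf_eq, List.length_take]
      omega
    have hSne : ((fun n => (q n).take (j + 1)) '' {n | j ≤ n}).Nonempty :=
      ⟨(q j).take (j + 1), ⟨j, Set.mem_setOf_eq ▸ le_rfl, rfl⟩⟩
    obtain ⟨r, hrmem, hrmax⟩ := hSf.exists_maximalFor id _ hSne
    obtain ⟨n₀, hn₀j, heq⟩ := hrmem
    refine ⟨n₀, r, hn₀j, fun n hn => ?_⟩
    have hle : r ≤ (q n).take (j + 1) := by
      rw [← heq]
      exact hchain j n₀ n hn₀j hn
    exact le_antisymm (hrmax ⟨n, le_trans hn₀j hn, rfl⟩ hle) hle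
  choose n₀ r hjn₀ hr using hstab
  set β : ℕ → Bool := fun j => (r j).getD j false with hβ
  have hrlen : ∀ j, (r j).length = j + 1 := by
    intro j
    rw [← hr j (n₀ j) le_rfl, List.length_take, hqlen (n₀ j)]
    have := hjn₀ j
    omega
  have hcompat : ∀ i j, i ≤ j → (r j).take (i + 1) = r i := by
    intro i j hij
    rw [← hr i (max (n₀ i) (n₀ j)) (le_max_left _ _),
      ← hr j (max (n₀ i) (n₀ j)) (le_max_right _ _), List.take_take]
    have : min (i + 1) (j + 1) = i + 1 := by omega
    rw [this]
  have hrpre : ∀ j, r j = pre β j := by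
    intro j
    apply list_ext_getD
    · rw [hrlen j, pre_length]
    · intro i hi
      rw [hrlen] at hi
      have hij : i ≤ j := by omega
      rw [pre_getD hij]
      show (r j).getD i false = (r i).getD i false
      rw [← hcompat i j hij, getD_take (by omega)]
  have hβmem : β ∈ BranchSet A w h := by
    intro j
    obtain ⟨u, hu1, hu2, hu3⟩ :=
      exists_ancestor hprof (hD (n₀ j)) (n := j) (by rw [hlev]; exact hjn₀ j)
    refine ⟨u, hu1, hu2, ?_⟩
    rw [hu3, ← hrpre j, ← hr j (n₀ j) le_rfl]
  refine ⟨β, hβmem, fun N => ?_⟩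
  by_contra hc
  push_neg at hc
  have hβfalse : ∀ i, N ≤ i → β i = false := by
    intro i hi
    cases hβi : β i
    · rfl
    · exact absurd hβi (hc i hi)
  obtain ⟨n, hn1, hn2⟩ := hacc (max (n₀ N) N)
  have hNn : N ≤ n := le_trans (le_max_right _ _) hn1
  have h1 : q n ≤ r n := by
    have hch := hchain n n (max (n₀ n) n) le_rfl (le_max_right _ _)
    rwa [List.take_of_length_le (by rw [hqlen n]), hr n _ (le_max_left _ _)] at hch
  have hqlast : (q n).getD n false = true := by
    show (h (π n)).getD n false = true
    have hx := h_getD_last hprof (hD n)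
    rw [hlev n] at hx
    rw [hx, hn2]
  have hrlast : (r n).getD n false = false := by
    rw [hrpre n, pre_getD le_rfl]
    exact hβfalse n hNn
  have hne : q n ≠ r n := by
    intro he
    rw [he, hrlast] at hqlast
    simp at hqlast
  have hlt : q n < r n := lt_of_le_of_ne h1 hne
  obtain ⟨i, hilen, hitake, hiq, hir⟩ :=
    lex_firstdiff (profLt_iff_lt.mpr hlt) (by rw [hqlen n, hrlen n])
  rw [hqlen n] at hilen
  have hβi : β i = true := by
    have hx : (r n).getD i false = β i := by
      rw [hrpre n, pre_getD (by omega)]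
    rw [← hx, hir]
  have hiN : i < N := by
    by_contra hge
    push_neg at hge
    rw [hβfalse i hge] at hβi
    simp at hβi
  have hagree : (q n).getD i false = (r n).getD i false := by
    have e1 : (q n).take (N + 1) = r N := hr N n (le_trans (le_max_left _ _) hn1)
    have e2 : (r n).take (N + 1) = r N := hcompat N n hNn
    rw [← getD_take (l := q n) (k := N + 1) (i := i) (by omega) false,
      ← getD_take (l := r n) (k := N + 1) (i := i) (by omega) false, e1, e2]
  rw [hiq, hir] at hagree
  simp at hagree

end MainAux2

/-- `G` has an accepting path iff `G''` has infinitely many F-nodes. -/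
theorem stmt7 {Q σ : Type} [Finite Q] (A : NBW Q σ) (w : ℕ → σ) (h : Q × ℕ → List Bool)
    (hprof : A.IsProfileFun w h) :
    (∃ π : ℕ → Q × ℕ, A.AcceptingPath (A.Edge w) π) ↔
    Set.Infinite {v : Q × ℕ | A.InDag'' w h v ∧ A.acc v.1 = true} := by
  constructor
  · rintro ⟨π, hπ⟩
    obtain ⟨β, hβmem, hβtrue⟩ := fromAccepting hprof hπ
    obtain ⟨π', hπ'1, hπ'2⟩ := realize hprof hβmem
    apply unbounded_infinite
    intro m
    obtain ⟨n, hn1, hn2⟩ := hβtrue m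
    refine ⟨π' n, ⟨(hπ'1 n).2.1, ?_⟩, by rw [(hπ'1 n).1]; exact hn1⟩
    rw [acc_of_pre hprof (hπ'1 n).2.1.1 (hπ'1 n).1 (hπ'1 n).2.2]
    exact hn2
  · intro hinf
    obtain ⟨β, hβmem, hβtrue⟩ := fromInfinite hprof hinf
    obtain ⟨π', hπ'1, hπ'2⟩ := realize hprof hβmem
    refine ⟨π', ⟨⟨?_, (hπ'1 0).1, fun i => (hπ'2 i).1⟩, fun N => ?_⟩⟩
    · obtain ⟨p, hp0, -, hpe⟩ := (hπ'1 0).2.1.1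
      rw [(hπ'1 0).1] at hpe
      rw [← hpe]
      exact hp0
    · obtain ⟨n, hn1, hn2⟩ := hβtrue N
      refine ⟨n, hn1, ?_⟩
      rw [acc_of_pre hprof (hπ'1 n).2.1.1 (hπ'1 n).1 (hπ'1 n).2.2]
      exact hn2
end

section
/- The labeling λ^k is legal (every ⊥-labeled node is finite in G') if and only if k is an F-finite level of G (every F-node after level k is finite in G'). -/
section Aux

private lemma profLt_trans {a b c : List Bool} (h1 : ProfLt a b) (h2 : ProfLt b c) :
    ProfLt a c :=
  List.lex_trans (fun h1 h2 => lt_trans h1 h2) h1 h2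

private lemma profLt_irrefl (a : List Bool) : ¬ ProfLt a a :=
  _root_.irrefl_of (List.Lex (· < ·)) a

private lemma profLt_trichotomy (a b : List Bool) : ProfLt a b ∨ a = b ∨ ProfLt b a :=
  _root_.trichotomous_of (List.Lex (· < ·)) a b

private lemma exists_max_profile (t : Finset (List Bool)) (ht : t.Nonempty) :
    ∃ a ∈ t, ∀ b ∈ t, ¬ ProfLt a b := by
  classical
  induction t using Finset.induction with
  | empty => exact absurd ht (by simp)
  | @insert x s hx ih =>
    rcases s.eq_empty_or_nonempty with rfl | hs
    · refine ⟨x, Finset.mem_insert_self _ _, ?_⟩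
      intro b hb
      rcases Finset.mem_insert.1 hb with rfl | hb
      · exact profLt_irrefl _
      · simp at hb
    · obtain ⟨a, ha, hmax⟩ := ih hs
      rcases profLt_trichotomy a x with hax | rfl | hxa
      · refine ⟨x, Finset.mem_insert_self _ _, ?_⟩
        intro b hb hxb
        rcases Finset.mem_insert.1 hb with rfl | hb
        · exact profLt_irrefl _ hxb
        · exact hmax b hb (profLt_trans hax hxb)
      · refine ⟨a, Finset.mem_insert_self _ _, ?_⟩
        intro b hb
        rcases Finset.mem_insert.1 hb with rfl | hb
        · exact profLt_irrefl _
        · exact hmax b hb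
      · refine ⟨a, Finset.mem_insert_of_mem ha, ?_⟩
        intro b hb
        rcases Finset.mem_insert.1 hb with rfl | hb
        · intro hab; exact profLt_irrefl _ (profLt_trans hxa hab)
        · exact hmax b hb

variable {Q σ : Type}

private lemma exists_edge'_parent (A : NBW Q σ) (w : ℕ → σ) (h : Q × ℕ → List Bool)
    (hprof : A.IsProfileFun w h) {v : Q × ℕ} (hv : A.InDag w v) (n : ℕ) (hv2 : v.2 = n + 1) :
    ∃ u, A.Edge' w h u v := by
  classical
  obtain ⟨p, hp0, hptr, hpend⟩ := hv
  -- a first parent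
  have hu0dag : A.InDag w (p n, n) := ⟨p, hp0, fun j hj => hptr j (by omega), rfl⟩
  have hu0edge : A.Edge w (p n, n) v := by
    refine ⟨hu0dag, hv2, ?_⟩
    have := hptr n (by omega)
    rw [← hpend, hv2]
    exact this
  -- the set of profiles of parents is finite
  have hlen : ∀ u : Q × ℕ, A.Edge w u v → (h u).length = n + 1 := by
    intro u hu
    have hudag : A.InDag w u := hu.1
    obtain ⟨⟨q, hq, hq'⟩, _⟩ := hprof u hudag
    have hu2 : u.2 = n := by have := hu.2.1; omega
    rw [← hq', NBW.profileOf, hu2]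
    simp
  have hSfin : Set.Finite {l : List Bool | ∃ u, A.Edge w u v ∧ h u = l} := by
    apply Set.Finite.subset (List.finite_length_eq Bool (n + 1))
    rintro l ⟨u, hu, rfl⟩
    exact hlen u hu
  have hne : (hSfin.toFinset).Nonempty :=
    ⟨h (p n, n), by simp only [Set.Finite.mem_toFinset]; exact ⟨(p n, n), hu0edge, rfl⟩⟩
  obtain ⟨a, ha, hmax⟩ := exists_max_profile hSfin.toFinset hne
  rw [Set.Finite.mem_toFinset] at ha
  obtain ⟨u1, hu1, rfl⟩ := ha
  refine ⟨u1, hu1, ?_⟩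
  intro u' hu' hlt
  exact hmax (h u') (by simp only [Set.Finite.mem_toFinset]; exact ⟨u', hu', rfl⟩) hlt

end Aux

/-- `λ^k` is legal iff `k` is an F-finite level of `G`. -/

theorem stmt11 {Q σ : Type} (A : NBW Q σ) (w : ℕ → σ) (h : Q × ℕ → List Bool)
    (hprof : A.IsProfileFun w h) (k : ℕ) (lam : Q × ℕ → Bool)
    (hlam : A.IsRetroLabeling w h k lam) :
    A.Legal w h lam ↔
    (∀ v, A.InDag w v → A.acc v.1 = true → k < v.2 → A.FiniteIn' w h v) := by
  obtain ⟨htop, hF, hinh⟩ := hlam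
  constructor
  · intro hleg v hv hacc hk
    exact hleg v hv (hF v hv hk hacc)
  · intro hfin u hu hlamu
    have main : ∀ n (u : Q × ℕ), u.2 = n → A.InDag w u → lam u = false →
        A.FiniteIn' w h u := by
      intro n
      induction n using Nat.strong_induction_on with
      | _ n ih =>
        intro u hun hu hlamu
        by_cases hk : u.2 ≤ k
        · rw [htop u hu hk] at hlamu; exact absurd hlamu (by simp)
        push_neg at hk
        by_cases hacc : A.acc u.1 = true
        · exact hfin u hu hacc hk
        · have hacc' : A.acc u.1 = false := by simpa using hacc
          obtain ⟨m, hm⟩ : ∃ m, u.2 = m + 1 := ⟨u.2 - 1, by omega⟩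
          obtain ⟨p, hp⟩ := exists_edge'_parent A w h hprof hu m hm
          have hlamp : lam p = false := by
            rw [hinh p u hk hacc' hp] at hlamu; exact hlamu
          have hp2 : p.2 = m := by have := hp.1.2.1; omega
          have hfinp := ih m (by omega) p hp2 hp.1.1 hlamp
          exact hfinp.subset fun x hx => Relation.ReflTransGen.head hp hx
    exact main u.2 u rfl hu hlamu
end
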